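/- Let p ≥ 1 and s ≥ 1 be integers and let (d,r) be an arithmetical structure on the coconut tree CT(p,s). Then the following three conditions are equivalent: (1) d_i ≥ 2 for all 1 ≤ i ≤ p−1; (2) 0 < r_2 − r_1 ≤ r_3 − r_2 ≤ … ≤ r_{p−1} − r_{p−2} ≤ r_p − r_{p−1}; (3) r_1 < r_2 < … < r_p. -/
import Mathlib


/-- The conditions defining an arithmetical structure on the coconut tree `CT(p,s)`:
the path vertices are `v_1, …, v_p` with labels `d i`, `r i` for `1 ≤ i ≤ p`, the
leaves are `ℓ_1, …, ℓ_s` with labels `dl j`, `rl j` for `1 ≤ j ≤ s`; `v_i` is adjacent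
to `v_{i+1}` for `1 ≤ i ≤ p - 1` and every leaf is adjacent to `v_p`.  All labels are
positive, at every vertex `d_v * r_v` equals the sum of the `r`-values of its
neighbors, and the gcd of all the `r`-values is `1`. -/
def IsCTArith (p s : ℕ) (d r dl rl : ℕ → ℕ) : Prop :=
  (∀ i, 1 ≤ i → i ≤ p → 0 < d i) ∧
  (∀ i, 1 ≤ i → i ≤ p → 0 < r i) ∧
  (∀ j, 1 ≤ j → j ≤ s → 0 < dl j) ∧
  (∀ j, 1 ≤ j → j ≤ s → 0 < rl j) ∧
  (∀ i, 1 ≤ i → i ≤ p → d i * r i =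
      (if 2 ≤ i then r (i - 1) else 0) +
      (if i < p then r (i + 1) else 0) +
      (if i = p then ∑ j ∈ Finset.Icc 1 s, rl j else 0)) ∧
  (∀ j, 1 ≤ j → j ≤ s → dl j * rl j = r p) ∧
  Nat.gcd ((Finset.Icc 1 p).gcd r) ((Finset.Icc 1 s).gcd rl) = 1

/-- An arithmetical structure on `CT(p,s)` is smooth if `d_i ≥ 2` for all
`1 ≤ i ≤ p - 1` and `d_{ℓ_j} ≥ 2` for all `1 ≤ j ≤ s`. -/
def IsCTSmooth (p s : ℕ) (d dl : ℕ → ℕ) : Prop :=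
  (∀ i, 1 ≤ i → i ≤ p - 1 → 2 ≤ d i) ∧ (∀ j, 1 ≤ j → j ≤ s → 2 ≤ dl j)

/-- Lemma 2.1 analogue for coconut trees.  For an arithmetical
structure `(d, r)` on `CT(p,s)`, the following are equivalent:
(1) `d_i ≥ 2` for all `1 ≤ i ≤ p-1`;
(2) `0 < r_2 - r_1 ≤ r_3 - r_2 ≤ … ≤ r_p - r_{p-1}`;
(3) `r_1 < r_2 < … < r_p`. -/
theorem ct_increasing_r_tfae (p s : ℕ) (hp : 1 ≤ p) (hs : 1 ≤ s)
    (d r dl rl : ℕ → ℕ) (h : IsCTArith p s d r dl rl) :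
    ((∀ i, 1 ≤ i → i ≤ p - 1 → 2 ≤ d i) ↔
      ((1 < p → 0 < (r 2 : ℤ) - (r 1 : ℤ)) ∧
        ∀ i, 2 ≤ i → i ≤ p - 1 →
          (r i : ℤ) - (r (i - 1) : ℤ) ≤ (r (i + 1) : ℤ) - (r i : ℤ))) ∧
    (((1 < p → 0 < (r 2 : ℤ) - (r 1 : ℤ)) ∧
        ∀ i, 2 ≤ i → i ≤ p - 1 →
          (r i : ℤ) - (r (i - 1) : ℤ) ≤ (r (i + 1) : ℤ) - (r i : ℤ)) ↔
      (∀ i, 1 ≤ i → i ≤ p - 1 → r i < r (i + 1))) := by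
  obtain ⟨hd, hr, -, -, heq, -, -⟩ := h
  have eq1 : 1 < p → d 1 * r 1 = r 2 := by
    intro h1
    have := heq 1 le_rfl hp
    rw [if_neg (by omega), if_pos h1, if_neg (by omega)] at this
    norm_num at this
    omega
  have eqi : ∀ i, 2 ≤ i → i ≤ p - 1 → d i * r i = r (i - 1) + r (i + 1) := by
    intro i h2 hip
    have := heq i (by omega) (by omega)
    rw [if_pos h2, if_pos (by omega : i < p), if_neg (by omega : ¬ i = p)] at this
    omega
  -- (2) → (1)
  have B1 : ((1 < p → 0 < (r 2 : ℤ) - (r 1 : ℤ)) ∧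
        ∀ i, 2 ≤ i → i ≤ p - 1 →
          (r i : ℤ) - (r (i - 1) : ℤ) ≤ (r (i + 1) : ℤ) - (r i : ℤ)) →
      (∀ i, 1 ≤ i → i ≤ p - 1 → 2 ≤ d i) := by
    rintro ⟨h2a, h2b⟩ i hi1 hip
    rcases Nat.lt_or_ge i 2 with hi2 | hi2
    · have hi1' : i = 1 := by omega
      subst hi1'
      have hp1 : 1 < p := by omega
      have h12 : r 1 < r 2 := by have := h2a hp1; omega
      have e := eq1 hp1
      rcases Nat.lt_or_ge (d 1) 2 with hl | hg
      · exfalso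
        have : d 1 * r 1 ≤ r 1 := by
          calc d 1 * r 1 ≤ 1 * r 1 := Nat.mul_le_mul_right _ (by omega)
            _ = r 1 := one_mul _
        omega
      · exact hg
    · have e := eqi i hi2 hip
      have hri : 0 < r i := hr i (by omega) (by omega)
      have h2 := h2b i hi2 hip
      have hn : 2 * r i ≤ r (i - 1) + r (i + 1) := by omega
      rcases Nat.lt_or_ge (d i) 2 with hl | hg
      · exfalso
        have : d i * r i ≤ r i := by
          calc d i * r i ≤ 1 * r i := Nat.mul_le_mul_right _ (by omega)
            _ = r i := one_mul _
        omega
      · exact hg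
  -- (1) → (2)
  have A1 : (∀ i, 1 ≤ i → i ≤ p - 1 → 2 ≤ d i) →
      ((1 < p → 0 < (r 2 : ℤ) - (r 1 : ℤ)) ∧
        ∀ i, 2 ≤ i → i ≤ p - 1 →
          (r i : ℤ) - (r (i - 1) : ℤ) ≤ (r (i + 1) : ℤ) - (r i : ℤ)) := by
    intro h1
    constructor
    · intro hp1
      have hd1 : 2 ≤ d 1 := h1 1 le_rfl (by omega)
      have e := eq1 hp1
      have hr1 : 0 < r 1 := hr 1 le_rfl hp
      have : 2 * r 1 ≤ r 2 := by
        calc 2 * r 1 ≤ d 1 * r 1 := Nat.mul_le_mul_right _ hd1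
          _ = r 2 := e
      omega
    · intro i hi2 hip
      have hdi : 2 ≤ d i := h1 i (by omega) hip
      have e := eqi i hi2 hip
      have : 2 * r i ≤ r (i - 1) + r (i + 1) := by
        calc 2 * r i ≤ d i * r i := Nat.mul_le_mul_right _ hdi
          _ = _ := e
      omega
  -- (2) → (3)
  have B3 : ((1 < p → 0 < (r 2 : ℤ) - (r 1 : ℤ)) ∧
        ∀ i, 2 ≤ i → i ≤ p - 1 →
          (r i : ℤ) - (r (i - 1) : ℤ) ≤ (r (i + 1) : ℤ) - (r i : ℤ)) →
      (∀ i, 1 ≤ i → i ≤ p - 1 → r i < r (i + 1)) := by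
    rintro ⟨h2a, h2b⟩
    have key : ∀ i, 1 ≤ i → i ≤ p - 1 → 0 < (r (i + 1) : ℤ) - r i := by
      intro i hi
      induction i, hi using Nat.le_induction with
      | base =>
        intro h1
        have := h2a (by omega)
        norm_num
        linarith
      | succ n hn ih =>
        intro hle
        have h1 := ih (by omega)
        have h2 := h2b (n + 1) (by omega) hle
        simp only [Nat.add_sub_cancel] at h2
        linarith
    intro i hi1 hip
    have := key i hi1 hip
    omega
  -- (3) → (2)
  have C2 : (∀ i, 1 ≤ i → i ≤ p - 1 → r i < r (i + 1)) →
      ((1 < p → 0 < (r 2 : ℤ) - (r 1 : ℤ)) ∧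
        ∀ i, 2 ≤ i → i ≤ p - 1 →
          (r i : ℤ) - (r (i - 1) : ℤ) ≤ (r (i + 1) : ℤ) - (r i : ℤ)) := by
    intro h3
    constructor
    · intro hp1
      have h12 : r 1 < r 2 := by
        have := h3 1 le_rfl (by omega)
        norm_num at this
        exact this
      omega
    · intro i h2 hip
      have hlt1 : r (i - 1) < r i := by
        have := h3 (i - 1) (by omega) (by omega)
        rwa [Nat.sub_add_cancel (by omega)] at this
      have hlt2 : r i < r (i + 1) := h3 i (by omega) hip
      have e := eqi i h2 hip
      have hri : 0 < r i := hr i (by omega) (by omega)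
      have hri1 : 0 < r (i - 1) := hr (i - 1) (by omega) (by omega)
      have hd2 : 2 ≤ d i := by
        rcases Nat.lt_or_ge (d i) 2 with hl | hg
        · exfalso
          have : d i * r i ≤ r i := by
            calc d i * r i ≤ 1 * r i := Nat.mul_le_mul_right _ (by omega)
              _ = r i := one_mul _
          omega
        · exact hg
      have : 2 * r i ≤ r (i - 1) + r (i + 1) := by
        calc 2 * r i ≤ d i * r i := Nat.mul_le_mul_right _ hd2
          _ = _ := e
      omega
  exact ⟨⟨A1, B1⟩, ⟨B3, C2⟩⟩
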